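/- Let s ∈ ℝ satisfy 8s⁸ ∉ Λ(s). If A ⊆ ℝ² is a set whose distance set satisfies Δ(A) ⊆ {n + s : n ∈ ℕ}, then A has at most 3 elements. -/

import Mathlib

/-- The set `Λ(s) = ℤ + 4sℤ + 2s²ℤ + 4s³ℤ + s⁴ℤ + 2s⁵ℤ + 2s⁶ℤ + 4s⁷ℤ`. -/
def Lambda (s : ℝ) : Set ℝ :=
  {x | ∃ n₀ n₁ n₂ n₃ n₄ n₅ n₆ n₇ : ℤ,
    x = (n₀ : ℝ) + 4 * n₁ * s + 2 * n₂ * s ^ 2 + 4 * n₃ * s ^ 3 + n₄ * s ^ 4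
      + 2 * n₅ * s ^ 5 + 2 * n₆ * s ^ 6 + 4 * n₇ * s ^ 7}

private lemma dist_sq_plane (x y : EuclideanSpace ℝ (Fin 2)) :
    dist x y ^ 2 = (x 0 - y 0) ^ 2 + (x 1 - y 1) ^ 2 := by
  rw [EuclideanSpace.dist_eq, Real.sq_sqrt (by positivity)]
  simp [Fin.sum_univ_two, Real.dist_eq, sq_abs]

set_option maxRecDepth 100000 in
set_option maxHeartbeats 2000000 in
/-- If four points in the plane have all pairwise distances of the form `n + s`
with `n ∈ ℕ`, then `8 s^8 ∈ Λ(s)`. -/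
private lemma eight_s_pow_mem (s : ℝ) (p₁ p₂ p₃ p₄ : EuclideanSpace ℝ (Fin 2))
    (a b c d e f : ℕ)
    (h₁₂ : dist p₁ p₂ = (a : ℝ) + s) (h₁₃ : dist p₁ p₃ = (b : ℝ) + s)
    (h₁₄ : dist p₁ p₄ = (c : ℝ) + s) (h₂₃ : dist p₂ p₃ = (d : ℝ) + s)
    (h₂₄ : dist p₂ p₄ = (e : ℝ) + s) (h₃₄ : dist p₃ p₄ = (f : ℝ) + s) :
    8 * s ^ 8 ∈ Lambda s := by
  have e₁₂ : (p₁ 0 - p₂ 0) ^ 2 + (p₁ 1 - p₂ 1) ^ 2 = ((a : ℝ) + s) ^ 2 := by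
    rw [← dist_sq_plane, h₁₂]
  have e₁₃ : (p₁ 0 - p₃ 0) ^ 2 + (p₁ 1 - p₃ 1) ^ 2 = ((b : ℝ) + s) ^ 2 := by
    rw [← dist_sq_plane, h₁₃]
  have e₁₄ : (p₁ 0 - p₄ 0) ^ 2 + (p₁ 1 - p₄ 1) ^ 2 = ((c : ℝ) + s) ^ 2 := by
    rw [← dist_sq_plane, h₁₄]
  have e₂₃ : (p₂ 0 - p₃ 0) ^ 2 + (p₂ 1 - p₃ 1) ^ 2 = ((d : ℝ) + s) ^ 2 := by
    rw [← dist_sq_plane, h₂₃]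
  have e₂₄ : (p₂ 0 - p₄ 0) ^ 2 + (p₂ 1 - p₄ 1) ^ 2 = ((e : ℝ) + s) ^ 2 := by
    rw [← dist_sq_plane, h₂₄]
  have e₃₄ : (p₃ 0 - p₄ 0) ^ 2 + (p₃ 1 - p₄ 1) ^ 2 = ((f : ℝ) + s) ^ 2 := by
    rw [← dist_sq_plane, h₃₄]
  -- the (scaled) Cayley–Menger / Gram determinant identity for four planar points
  have key :
      8 * (((p₁ 0 - p₄ 0) ^ 2 + (p₁ 1 - p₄ 1) ^ 2) * (((p₂ 0 - p₄ 0) ^ 2 + (p₂ 1 - p₄ 1) ^ 2)) *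
            (((p₃ 0 - p₄ 0) ^ 2 + (p₃ 1 - p₄ 1) ^ 2)))
        + 2 * ((((p₁ 0 - p₄ 0) ^ 2 + (p₁ 1 - p₄ 1) ^ 2) + (((p₂ 0 - p₄ 0) ^ 2 + (p₂ 1 - p₄ 1) ^ 2))
              - (((p₁ 0 - p₂ 0) ^ 2 + (p₁ 1 - p₂ 1) ^ 2)))
            * (((p₁ 0 - p₄ 0) ^ 2 + (p₁ 1 - p₄ 1) ^ 2) + (((p₃ 0 - p₄ 0) ^ 2 + (p₃ 1 - p₄ 1) ^ 2))
              - (((p₁ 0 - p₃ 0) ^ 2 + (p₁ 1 - p₃ 1) ^ 2)))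
            * ((((p₂ 0 - p₄ 0) ^ 2 + (p₂ 1 - p₄ 1) ^ 2)) + (((p₃ 0 - p₄ 0) ^ 2 + (p₃ 1 - p₄ 1) ^ 2))
              - (((p₂ 0 - p₃ 0) ^ 2 + (p₂ 1 - p₃ 1) ^ 2))))
        - 2 * (((p₁ 0 - p₄ 0) ^ 2 + (p₁ 1 - p₄ 1) ^ 2))
            * ((((p₂ 0 - p₄ 0) ^ 2 + (p₂ 1 - p₄ 1) ^ 2)) + (((p₃ 0 - p₄ 0) ^ 2 + (p₃ 1 - p₄ 1) ^ 2))
              - (((p₂ 0 - p₃ 0) ^ 2 + (p₂ 1 - p₃ 1) ^ 2))) ^ 2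
        - 2 * ((((p₂ 0 - p₄ 0) ^ 2 + (p₂ 1 - p₄ 1) ^ 2)))
            * (((p₁ 0 - p₄ 0) ^ 2 + (p₁ 1 - p₄ 1) ^ 2) + (((p₃ 0 - p₄ 0) ^ 2 + (p₃ 1 - p₄ 1) ^ 2))
              - (((p₁ 0 - p₃ 0) ^ 2 + (p₁ 1 - p₃ 1) ^ 2))) ^ 2
        - 2 * ((((p₃ 0 - p₄ 0) ^ 2 + (p₃ 1 - p₄ 1) ^ 2)))
            * (((p₁ 0 - p₄ 0) ^ 2 + (p₁ 1 - p₄ 1) ^ 2) + (((p₂ 0 - p₄ 0) ^ 2 + (p₂ 1 - p₄ 1) ^ 2))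
              - (((p₁ 0 - p₂ 0) ^ 2 + (p₁ 1 - p₂ 1) ^ 2))) ^ 2 = 0 := by
    ring
  rw [e₁₂, e₁₃, e₁₄, e₂₃, e₂₄, e₃₄] at key
  refine ⟨0, 0, 2*d^2*e^2*f^2 - 2*c^2*d^2*f^2 - 2*c^2*d^2*e^2 + 2*c^2*d^4 + 2*c^4*d^2 - 2*b^2*e^2*f^2 + 2*b^2*e^4 - 2*b^2*d^2*e^2 + 2*b^2*c^2*f^2 - 2*b^2*c^2*e^2 - 2*b^2*c^2*d^2 + 2*b^4*e^2 + 2*a^2*f^4 - 2*a^2*e^2*f^2 - 2*a^2*d^2*f^2 - 2*a^2*c^2*f^2 + 2*a^2*c^2*e^2 - 2*a^2*c^2*d^2 - 2*a^2*b^2*f^2 - 2*a^2*b^2*e^2 + 2*a^2*b^2*d^2 + 2*a^4*f^2, 2*d*e^2*f^2 + 2*d^2*e*f^2 + 2*d^2*e^2*f - 2*c*d^2*f^2 - 2*c*d^2*e^2 + 2*c*d^4 - 2*c^2*d*f^2 - 2*c^2*d*e^2 - 2*c^2*d^2*f - 2*c^2*d^2*e + 4*c^2*d^3 + 4*c^3*d^2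 + 2*c^4*d - 2*b*e^2*f^2 + 2*b*e^4 - 2*b*d^2*e^2 + 2*b*c^2*f^2 - 2*b*c^2*e^2 - 2*b*c^2*d^2 - 2*b^2*e*f^2 - 2*b^2*e^2*f + 4*b^2*e^3 - 2*b^2*d*e^2 - 2*b^2*d^2*e + 2*b^2*c*f^2 - 2*b^2*c*e^2 - 2*b^2*c*d^2 + 2*b^2*c^2*f - 2*b^2*c^2*e - 2*b^2*c^2*d + 4*b^3*e^2 + 2*b^4*e + 2*a*f^4 - 2*a*e^2*f^2 - 2*a*d^2*f^2 - 2*a*c^2*f^2 + 2*a*c^2*e^2 - 2*a*c^2*d^2 - 2*a*b^2*f^2 - 2*a*b^2*e^2 + 2*a*b^2*d^2 + 4*a^2*f^3 - 2*a^2*e*f^2 - 2*a^2*e^2*f - 2*a^2*d*f^2 - 2*a^2*d^2*f - 2*a^2*c*f^2 + 2*a^2*c*e^2 - 2*a^2*c*d^2 - 2*a^2*c^2*f + 2*a^2*c^2*e - 2*a^2*c^2*d - 2*a^2*b*f^2 - 2*a^2*b*e^2 + 2*a^2*b*d^2 - 2*a^2*b^2*f - 2*a^2*b^2*e + 2*a^2*b^2*d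 + 4*a^3*f^2 + 2*a^4*f, 4*f^4 - 4*e^2*f^2 + 4*e^4 + 16*d*e*f^2 + 16*d*e^2*f - 4*d^2*f^2 + 16*d^2*e*f - 4*d^2*e^2 + 4*d^4 - 16*c*d*f^2 - 16*c*d*e^2 - 16*c*d^2*f - 16*c*d^2*e + 32*c*d^3 - 4*c^2*f^2 - 4*c^2*e^2 - 16*c^2*d*f - 16*c^2*d*e + 32*c^2*d^2 + 32*c^3*d + 4*c^4 - 16*b*e*f^2 - 16*b*e^2*f + 32*b*e^3 - 16*b*d*e^2 - 16*b*d^2*e + 16*b*c*f^2 - 16*b*c*e^2 - 16*b*c*d^2 + 16*b*c^2*f - 16*b*c^2*e - 16*b*c^2*d - 4*b^2*f^2 - 16*b^2*e*f + 32*b^2*e^2 - 16*b^2*d*e - 4*b^2*d^2 + 16*b^2*c*f - 16*b^2*c*e - 16*b^2*c*d - 4*b^2*c^2 + 32*b^3*e + 4*b^4 + 32*a*f^3 - 16*a*e*f^2 - 16*a*e^2*f - 16*a*d*f^2 - 16*a*d^2*f - 16*a*c*f^2 + 16*a*c*e^2 - 16*a*c*d^2 - 16*a*c^2*f + 16*a*c^2*e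 - 16*a*c^2*d - 16*a*b*f^2 - 16*a*b*e^2 + 16*a*b*d^2 - 16*a*b^2*f - 16*a*b^2*e + 16*a*b^2*d + 32*a^2*f^2 - 16*a^2*e*f - 4*a^2*e^2 - 16*a^2*d*f - 4*a^2*d^2 - 16*a^2*c*f + 16*a^2*c*e - 16*a^2*c*d - 4*a^2*c^2 - 16*a^2*b*f - 16*a^2*b*e + 16*a^2*b*d - 4*a^2*b^2 + 32*a^3*f + 4*a^4, 8*f^3 - 4*e*f^2 - 4*e^2*f + 8*e^3 - 4*d*f^2 + 16*d*e*f - 4*d*e^2 - 4*d^2*f - 4*d^2*e + 8*d^3 - 4*c*f^2 - 4*c*e^2 - 16*c*d*f - 16*c*d*e + 16*c*d^2 - 4*c^2*f - 4*c^2*e + 16*c^2*d + 8*c^3 - 4*b*f^2 - 16*b*e*f + 16*b*e^2 - 16*b*d*e - 4*b*d^2 + 16*b*c*f - 16*b*c*e - 16*b*c*d - 4*b*c^2 - 4*b^2*f + 16*b^2*e - 4*b^2*d - 4*b^2*c + 8*b^3 + 16*a*f^2 - 16*a*e*f - 4*a*e^2 - 16*a*d*f - 4*a*d^2 - 16*a*c*f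 + 16*a*c*e - 16*a*c*d - 4*a*c^2 - 16*a*b*f - 16*a*b*e + 16*a*b*d - 4*a*b^2 + 16*a^2*f - 4*a^2*e - 4*a^2*d - 4*a^2*c - 4*a^2*b + 8*a^3, 6*f^2 - 8*e*f + 6*e^2 - 8*d*f - 8*d*e + 6*d^2 - 8*c*f - 8*c*e + 6*c^2 - 8*b*f - 8*b*d - 8*b*c + 6*b^2 - 8*a*e - 8*a*d - 8*a*c - 8*a*b + 6*a^2, -2*f - 2*e - 2*d - 2*c - 2*b - 2*a, ?_⟩
  push_cast
  linear_combination 2 * s ^ 2 * key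

private lemma no_four_points (s : ℝ) (hs : 8 * s ^ 8 ∉ Lambda s)
    (A : Set (EuclideanSpace ℝ (Fin 2)))
    (hA : ∀ a ∈ A, ∀ a' ∈ A, a ≠ a' → ∃ n : ℕ, dist a a' = (n : ℝ) + s)
    (p₁ p₂ p₃ p₄ : EuclideanSpace ℝ (Fin 2))
    (m₁ : p₁ ∈ A) (m₂ : p₂ ∈ A) (m₃ : p₃ ∈ A) (m₄ : p₄ ∈ A)
    (h12 : p₁ ≠ p₂) (h13 : p₁ ≠ p₃) (h14 : p₁ ≠ p₄)
    (h23 : p₂ ≠ p₃) (h24 : p₂ ≠ p₄) (h34 : p₃ ≠ p₄) : False := by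
  obtain ⟨a, ha⟩ := hA p₁ m₁ p₂ m₂ h12
  obtain ⟨b, hb⟩ := hA p₁ m₁ p₃ m₃ h13
  obtain ⟨c, hc⟩ := hA p₁ m₁ p₄ m₄ h14
  obtain ⟨d, hd⟩ := hA p₂ m₂ p₃ m₃ h23
  obtain ⟨e, he⟩ := hA p₂ m₂ p₄ m₄ h24
  obtain ⟨f, hf⟩ := hA p₃ m₃ p₄ m₄ h34
  exact hs (eight_s_pow_mem s p₁ p₂ p₃ p₄ a b c d e f ha hb hc hd he hf)

private lemma four_of_ncard (t : Set (EuclideanSpace ℝ (Fin 2))) (ht : t.Finite)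
    (hc : t.ncard = 4) :
    ∃ p₁ p₂ p₃ p₄, p₁ ∈ t ∧ p₂ ∈ t ∧ p₃ ∈ t ∧ p₄ ∈ t ∧
      p₁ ≠ p₂ ∧ p₁ ≠ p₃ ∧ p₁ ≠ p₄ ∧ p₂ ≠ p₃ ∧ p₂ ≠ p₄ ∧ p₃ ≠ p₄ := by
  have hne : t.Nonempty := by
    rw [← Set.ncard_pos ht]; omega
  obtain ⟨p, hp⟩ := hne
  have h3 : (t \ {p}).ncard = 3 := by
    rw [Set.ncard_diff_singleton_of_mem hp, hc]
  obtain ⟨x, y, z, hxy, hxz, hyz, hxyz⟩ := Set.ncard_eq_three.mp h3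
  have hx : x ∈ t \ {p} := by rw [hxyz]; simp
  have hy : y ∈ t \ {p} := by rw [hxyz]; simp
  have hz : z ∈ t \ {p} := by rw [hxyz]; simp
  refine ⟨p, x, y, z, hp, hx.1, hy.1, hz.1, ?_, ?_, ?_, hxy, hxz, hyz⟩
  · exact fun h => hx.2 (by simp [← h])
  · exact fun h => hy.2 (by simp [← h])
  · exact fun h => hz.2 (by simp [← h])

/-- **Shifted Erdős–Solymosi theorem, general form.**
If `8s⁸ ∉ Λ(s)` and all pairwise distances between distinct points of `A ⊆ ℝ²`
lie in `{n + s : n ∈ ℕ}`, then `A` has at most 3 elements. -/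
theorem distance_set_shift_of_not_mem_Lambda (s : ℝ) (hs : 8 * s ^ 8 ∉ Lambda s)
    (A : Set (EuclideanSpace ℝ (Fin 2)))
    (hA : ∀ a ∈ A, ∀ a' ∈ A, a ≠ a' → ∃ n : ℕ, dist a a' = (n : ℝ) + s) :
    A.Finite ∧ A.ncard ≤ 3 := by
  have hfin : A.Finite := by
    by_contra hinf
    obtain ⟨t, hts, htf, htc⟩ := Set.Infinite.exists_subset_ncard_eq hinf 4
    obtain ⟨p₁, p₂, p₃, p₄, m₁, m₂, m₃, m₄, h12, h13, h14, h23, h24, h34⟩ :=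
      four_of_ncard t htf htc
    exact no_four_points s hs A hA p₁ p₂ p₃ p₄ (hts m₁) (hts m₂) (hts m₃) (hts m₄)
      h12 h13 h14 h23 h24 h34
  refine ⟨hfin, ?_⟩
  by_contra hcard
  push_neg at hcard
  obtain ⟨t, hts, htc⟩ := Set.exists_subset_card_eq (show 4 ≤ A.ncard by omega)
  have htf : t.Finite := hfin.subset hts
  obtain ⟨p₁, p₂, p₃, p₄, m₁, m₂, m₃, m₄, h12, h13, h14, h23, h24, h34⟩ :=
    four_of_ncard t htf htc
  exact no_four_points s hs A hA p₁ p₂ p₃ p₄ (hts m₁) (hts m₂) (hts m₃) (hts m₄)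
    h12 h13 h14 h23 h24 h34
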